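/- arXiv:1501.02512 — 6 statements merged into one kernel-verified Lean document; each statement's English description precedes it below -/
import Mathlib

section
/- Let M be a topological space equipped with a family of finitary operations (g_i)_{i ∈ I}, where g_i : M^{k_i} → M, and assume every g_i is continuous (with respect to the product topology on M^{k_i}). Let N be a topological space, let n ≥ 1, let r be a closed subset of N^n, and let ω_1, …, ω_n : M → N be continuous maps. Suppose s ⊆ M^n is a subuniverse of M^n (i.e., s is closed under coordinatewise application of each g_i), s is contained in the preimage (ω_1,…,ω_n)^{-1}(r) := {(a_1,…,a_n) ∈ M^n : (ω_1(a_1),…,ω_n(a_n)) ∈ r}, and s is maximal among subuniverses of M^n contained in this preimage (every subuniverse s' with s ⊆ s' ⊆ (ω_1,…,ω_n)^{-1}(r) equals s). Then s is a topologically closed subset of M^n (with the product topology). -/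
/-- **Closed Maximal Relations Lemma** (Lemma 2.1).
If `M` is a topological space with continuous finitary operations `g i`,
`r` is a closed subset of `N^n`, the maps `ω j : M → N` are continuous, and
`s` is a subuniverse of `M^n` contained in `(ω₁,…,ωₙ)⁻¹(r)` and maximal among
such subuniverses, then `s` is topologically closed. -/
theorem closed_maximal_relations
    {M N : Type*} [TopologicalSpace M] [TopologicalSpace N]
    {I : Type*} {k : I → ℕ} (g : ∀ i, (Fin (k i) → M) → M)
    (hg : ∀ i, Continuous (g i))
    {n : ℕ} (hn : 1 ≤ n) (r : Set (Fin n → N)) (hr : IsClosed r)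
    (ω : Fin n → M → N) (hω : ∀ j, Continuous (ω j))
    (s : Set (Fin n → M))
    (hs_sub : ∀ i (t : Fin (k i) → (Fin n → M)), (∀ j, t j ∈ s) →
      (fun m => g i (fun j => t j m)) ∈ s)
    (hs_pre : ∀ a ∈ s, (fun j => ω j (a j)) ∈ r)
    (hs_max : ∀ s' : Set (Fin n → M),
      (∀ i (t : Fin (k i) → (Fin n → M)), (∀ j, t j ∈ s') →
        (fun m => g i (fun j => t j m)) ∈ s') →
      s ⊆ s' → (∀ a ∈ s', (fun j => ω j (a j)) ∈ r) → s' = s) :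
    IsClosed s := by

  have key : closure s = s := by
    apply hs_max
    · intro i t ht
      -- F : (Fin (k i) → (Fin n → M)) → (Fin n → M)
      have hF : Continuous (fun t : Fin (k i) → (Fin n → M) =>
          (fun m => g i (fun j => t j m))) := by
        apply continuous_pi
        intro m
        exact (hg i).comp (continuous_pi fun j =>
          (continuous_apply m).comp (continuous_apply j))
      have hmaps : Set.MapsTo (fun t : Fin (k i) → (Fin n → M) =>
          (fun m => g i (fun j => t j m))) (Set.pi Set.univ (fun _ => s)) s := by
        intro t ht
        exact hs_sub i t (fun j => ht j (Set.mem_univ j))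
      have := hmaps.closure hF
      have htmem : t ∈ closure (Set.pi Set.univ (fun _ : Fin (k i) => s)) := by
        rw [closure_pi_set]
        exact fun j _ => ht j
      exact this htmem
    · exact subset_closure
    · -- closure s is contained in the closed preimage
      have hPclosed : IsClosed {a : Fin n → M | (fun j => ω j (a j)) ∈ r} := by
        have : Continuous (fun a : Fin n → M => fun j => ω j (a j)) :=
          continuous_pi fun j => (hω j).comp (continuous_apply j)
        exact hr.preimage this
      intro a ha
      exact closure_minimal (fun x hx => hs_pre x hx) hPclosed ha
  rw [← key]
  exact isClosed_closure
end

section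
/- Let A, M, N be types. Let X be a set of functions from A to M and let E be a set of functions from M to M such that g ∘ x ∈ X whenever g ∈ E and x ∈ X. Let α, β : X → M be functions satisfying α(g ∘ x) = g(α(x)) and β(g ∘ x) = g(β(x)) for all g ∈ E and x ∈ X. Let Ω be a set of functions from M to N, let Z := {ω ∘ x : ω ∈ Ω, x ∈ X} (a set of functions from A to N), and suppose there exist functions d_α, d_β : Z → N satisfying d_α(ω ∘ x) = ω(α(x)) and d_β(ω ∘ x) = ω(β(x)) for all ω ∈ Ω and x ∈ X. If the family {ω ∘ g : ω ∈ Ω, g ∈ E} separates the points of M (for all m ≠ m' in M there exist ω ∈ Ω, g ∈ E with ω(g(m)) ≠ ω(g(m'))) and α ≠ β, then d_α ≠ d_β. -/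
/-- Commuting Triangle Lemma, part (1) (Lemma 6.1(D)(1)): if `Ω ∘ E` separates the
points of `M` then the assignment `α ↦ d_α` is one-to-one. -/
theorem commuting_triangle_injective
    {A M N : Type*} (X : Set (A → M)) (E : Set (M → M))
    (hXE : ∀ g ∈ E, ∀ x ∈ X, g ∘ x ∈ X)
    (α β : X → M)
    (hα : ∀ g (hg : g ∈ E) x (hx : x ∈ X), α ⟨g ∘ x, hXE g hg x hx⟩ = g (α ⟨x, hx⟩))
    (hβ : ∀ g (hg : g ∈ E) x (hx : x ∈ X), β ⟨g ∘ x, hXE g hg x hx⟩ = g (β ⟨x, hx⟩))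
    (Ω : Set (M → N))
    (dα dβ : {f : A → N // ∃ ω ∈ Ω, ∃ x ∈ X, f = ω ∘ x} → N)
    (hdα : ∀ ω (hω : ω ∈ Ω) x (hx : x ∈ X),
      dα ⟨ω ∘ x, ω, hω, x, hx, rfl⟩ = ω (α ⟨x, hx⟩))
    (hdβ : ∀ ω (hω : ω ∈ Ω) x (hx : x ∈ X),
      dβ ⟨ω ∘ x, ω, hω, x, hx, rfl⟩ = ω (β ⟨x, hx⟩))
    (hsep : ∀ m m' : M, m ≠ m' → ∃ ω ∈ Ω, ∃ g ∈ E, ω (g m) ≠ ω (g m'))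
    (hαβ : α ≠ β) :
    dα ≠ dβ := by
  obtain ⟨⟨x, hx⟩, hne⟩ := Function.ne_iff.mp hαβ
  obtain ⟨ω, hω, g, hg, hsep'⟩ := hsep _ _ hne
  intro h
  apply hsep'
  have h1 := hdα ω hω (g ∘ x) (hXE g hg x hx)
  have h2 := hdβ ω hω (g ∘ x) (hXE g hg x hx)
  rw [hα g hg x hx] at h1
  rw [hβ g hg x hx] at h2
  rw [← h1, ← h2, h]
end

section
/- Let M be a type equipped with a family of finitary operations (g_i)_{i ∈ I} with g_i : M^{k_i} → M; call a subset of M × M a subuniverse of M² if it is closed under coordinatewise application of each g_i. Let N be a type, let ⊑ be a reflexive and antisymmetric binary relation on N, and let ω_1, ω_2 : M → N. Define P_Δ := {(a, b) : ω_1(a) = ω_2(b)}, P_⊑ := {(a, b) : ω_1(a) ⊑ ω_2(b)}, and P_⊒ := {(a, b) : ω_2(b) ⊑ ω_1(a)}. Suppose s is a subuniverse of M² contained in P_Δ and maximal among subuniverses contained in P_Δ, and suppose t_1, t_2 are subuniverses of M² with s ⊆ t_1 ⊆ P_⊑ and s ⊆ t_2 ⊆ P_⊒. Then s = t_1 ∩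 t_2. -/
/-- Combinatorial core of the ⊑-Lemma (Lemma 6.3): a subuniverse `s` of `M²` maximal
in `(ω₁, ω₂)⁻¹(Δ_N)` is the intersection of subuniverses `t₁ ⊆ (ω₁, ω₂)⁻¹(⊑)` and
`t₂ ⊆ (ω₁, ω₂)⁻¹(⊒)` containing it. -/
theorem sqsubseteq_lemma
    {M N : Type*} {I : Type*} {k : I → ℕ} (g : ∀ i, (Fin (k i) → M) → M)
    (sqle : N → N → Prop)
    (hrefl : ∀ x, sqle x x)
    (hanti : ∀ x y, sqle x y → sqle y x → x = y)
    (ω₁ ω₂ : M → N)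
    (s t₁ t₂ : Set (M × M))
    (hs_sub : ∀ i (t : Fin (k i) → M × M), (∀ j, t j ∈ s) →
      (g i (fun j => (t j).1), g i (fun j => (t j).2)) ∈ s)
    (hsΔ : s ⊆ {p : M × M | ω₁ p.1 = ω₂ p.2})
    (hs_max : ∀ s' : Set (M × M),
      (∀ i (t : Fin (k i) → M × M), (∀ j, t j ∈ s') →
        (g i (fun j => (t j).1), g i (fun j => (t j).2)) ∈ s') →
      s ⊆ s' → s' ⊆ {p : M × M | ω₁ p.1 = ω₂ p.2} → s' = s)
    (ht₁_sub : ∀ i (t : Fin (k i) → M × M), (∀ j, t j ∈ t₁) →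
      (g i (fun j => (t j).1), g i (fun j => (t j).2)) ∈ t₁)
    (hst₁ : s ⊆ t₁) (ht₁ : t₁ ⊆ {p : M × M | sqle (ω₁ p.1) (ω₂ p.2)})
    (ht₂_sub : ∀ i (t : Fin (k i) → M × M), (∀ j, t j ∈ t₂) →
      (g i (fun j => (t j).1), g i (fun j => (t j).2)) ∈ t₂)
    (hst₂ : s ⊆ t₂) (ht₂ : t₂ ⊆ {p : M × M | sqle (ω₂ p.2) (ω₁ p.1)}) :
    s = t₁ ∩ t₂ := by
  have h := hs_max (t₁ ∩ t₂)
    (fun i t ht => ⟨ht₁_sub i t (fun j => (ht j).1), ht₂_sub i t (fun j => (ht j).2)⟩)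
    (fun p hp => ⟨hst₁ hp, hst₂ hp⟩)
    (fun p hp => hanti _ _ (ht₁ hp.1) (ht₂ hp.2))
  exact h.symm
end

section
/- Let M := ℕ → Bool and define the alternating order ≼ on M by: a ≼ b iff for every even n, a n ≤ b n, and for every odd n, b n ≤ a n (with false < true). Then the set {(a, b) ∈ M × M : a ≼ b} is closed under the coordinatewise Ockham algebra operations: if a ≼ b and c ≼ d then a ⊔ c ≼ b ⊔ d and a ⊓ c ≼ b ⊓ d; if a ≼ b then ¬a ≼ ¬b; and ⊥ ≼ ⊥ and ⊤ ≼ ⊤. That is, ≼ forms a subalgebra of M₁². -/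
/-- The underlying set `{0,1}^{ℕ₀}`. -/
abbrev OckM : Type := ℕ → Bool

/-- Pointwise join. -/
def ockJoin (a b : OckM) : OckM := fun n => a n || b n

/-- Pointwise meet. -/
def ockMeet (a b : OckM) : OckM := fun n => a n && b n

/-- The bottom element. -/
def ockBot : OckM := fun _ => false

/-- The top element. -/
def ockTop : OckM := fun _ => true

/-- Negation: shift left, then complement. -/
def ockNeg (a : OckM) : OckM := fun n => !(a (n + 1))

/-- The alternating order `≼` on `{0,1}^{ℕ₀}`. -/
def altLe (a b : OckM) : Prop :=
  ∀ n : ℕ, (Even n → a n ≤ b n) ∧ (Odd n → b n ≤ a n)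

/-- The alternating order `≼` forms a subalgebra of `M₁²` (Section 4 of the paper). -/
theorem altLe_subalgebra :
    (∀ a b c d : OckM, altLe a b → altLe c d → altLe (ockJoin a c) (ockJoin b d)) ∧
    (∀ a b c d : OckM, altLe a b → altLe c d → altLe (ockMeet a c) (ockMeet b d)) ∧
    (∀ a b : OckM, altLe a b → altLe (ockNeg a) (ockNeg b)) ∧
    altLe ockBot ockBot ∧
    altLe ockTop ockTop := by
  refine ⟨?_, ?_, ?_, ?_, ?_⟩
  · intro a b c d hab hcd n
    have h1 := hab n; have h2 := hcd n
    constructor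
    · intro he
      exact sup_le_sup (h1.1 he) (h2.1 he)
    · intro ho
      exact sup_le_sup (h1.2 ho) (h2.2 ho)
  · intro a b c d hab hcd n
    have h1 := hab n; have h2 := hcd n
    constructor
    · intro he
      exact inf_le_inf (h1.1 he) (h2.1 he)
    · intro ho
      exact inf_le_inf (h1.2 ho) (h2.2 ho)
  · intro a b hab n
    have h := hab (n + 1)
    constructor
    · intro he
      have : b (n + 1) ≤ a (n + 1) := h.2 (Even.add_one he)
      simp only [ockNeg]
      cases hb : b (n + 1) <;> cases ha : a (n + 1) <;> simp_all [ockNeg]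
    · intro ho
      have : a (n + 1) ≤ b (n + 1) := h.1 (Odd.add_one ho)
      simp only [ockNeg]
      cases hb : b (n + 1) <;> cases ha : a (n + 1) <;> simp_all [ockNeg]
  · intro n; exact ⟨fun _ => le_refl _, fun _ => le_refl _⟩
  · intro n; exact ⟨fun _ => le_refl _, fun _ => le_refl _⟩
end

section
/- Let M := ℕ → Bool, define negation ¬ : M → M by (¬a) n := !(a (n+1)), and define the alternating order ≼ on M by: a ≼ b iff for every even n, a n ≤ b n, and for every odd n, b n ≤ a n (with false < true). If a, b ∈ M and a ⋠ b (it is not the case that a ≼ b), then there exists n ∈ ℕ such that (¬^[n] a) 0 = true and (¬^[n] b) 0 = false, where ¬^[n] denotes the n-fold iterate of ¬. -/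
lemma ockNeg_iter (n : ℕ) : ∀ (a : OckM) (k : ℕ),
    (ockNeg^[n] a) k = xor (n % 2 == 1) (a (n + k)) := by
  induction n with
  | zero => intro a k; simp
  | succ n ih =>
    intro a k
    rw [Function.iterate_succ_apply, ih]
    simp only [ockNeg]
    rcases Nat.even_or_odd n with h | h
    · have h2 : n % 2 = 0 := Nat.even_iff.mp h
      have h3 : (n + 1) % 2 = 1 := by omega
      simp [h2, h3]
      congr 1; omega
    · have h2 : n % 2 = 1 := Nat.odd_iff.mp h
      have h3 : (n + 1) % 2 = 0 := by omega
      simp [h2, h3]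
      congr 1; omega

/-- If `a ⋠ b` then some iterate of `¬` separates `a` from `b` at coordinate `0`
(Section 4 of the paper: `π₀ ∘ Clo₁(M₁)` separates the structure `M₂^♭`). -/
theorem neg_iterates_separate :
    ∀ a b : OckM, ¬ altLe a b →
      ∃ n : ℕ, (ockNeg^[n] a) 0 = true ∧ (ockNeg^[n] b) 0 = false := by
  intro a b h
  unfold altLe at h
  push_neg at h
  obtain ⟨n, hn⟩ := h
  by_cases hab : a n ≤ b n
  · obtain ⟨ho, hlt⟩ := hn (fun _ => hab)
    have h2 : n % 2 = 1 := Nat.odd_iff.mp ho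
    have ha : a n = false := by
      cases h1 : a n <;> cases h3 : b n <;> simp_all [Bool.lt_iff]
    have hb : b n = true := by
      cases h1 : b n <;> simp_all
    exact ⟨n, by simp [ockNeg_iter, h2, ha, hb]⟩
  · rcases Nat.even_or_odd n with he | ho
    · have h2 : n % 2 = 0 := Nat.even_iff.mp he
      have ha : a n = true := by
        cases h1 : a n <;> cases h3 : b n <;> simp_all
      have hb : b n = false := by
        cases h1 : b n <;> simp_all
      exact ⟨n, by simp [ockNeg_iter, h2, ha, hb]⟩
    · obtain ⟨_, hlt⟩ := hn (fun hev => absurd hev (Nat.not_even_iff_odd.mpr ho))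
      exact absurd hlt.le hab
end

section
/- Let M := ℕ → Bool, define negation ¬ : M → M by (¬a) n := !(a (n+1)), and define the alternating order ≼ on M by: a ≼ b iff for every even n, a n ≤ b n, and for every odd n, b n ≤ a n (with false < true). Let r ⊆ M × M be any relation that is closed under coordinatewise negation (if (a, b) ∈ r then (¬a, ¬b) ∈ r) and is contained in {(a, b) : a 0 ≤ b 0}. Then r ⊆ {(a, b) : a ≼ b}. In particular, since ≼ itself is closed under the coordinatewise operations ⊔, ⊓, ¬ of M₁ and is contained in {(a, b) : a 0 ≤ b 0}, the alternating order ≼ is the unique subalgebra of M₁² that is maximal among subalgebras contained in {(a, b) : a 0 ≤ b 0}. -/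
/-- A subset of `M × M` closed under the coordinatewise operations `⊔`, `⊓`, `¬`
of the Ockham algebra `M₁`, i.e. a subalgebra of `M₁²`. -/
def IsOckSubalgebra (s : Set (OckM × OckM)) : Prop :=
  (∀ p q, p ∈ s → q ∈ s → (ockJoin p.1 q.1, ockJoin p.2 q.2) ∈ s) ∧
  (∀ p q, p ∈ s → q ∈ s → (ockMeet p.1 q.1, ockMeet p.2 q.2) ∈ s) ∧
  (∀ p, p ∈ s → (ockNeg p.1, ockNeg p.2) ∈ s)

lemma iterNeg (n : ℕ) (a : OckM) (k : ℕ) :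
    (ockNeg^[n] a) k = (Bool.not)^[n] (a (k + n)) := by
  induction n generalizing a k with
  | zero => simp
  | succ n ih =>
    rw [Function.iterate_succ_apply, ih]
    show Bool.not^[n] (!(a (k + n + 1))) = _
    rw [← Function.iterate_succ_apply, Nat.add_assoc]

lemma notIterTwo (m : ℕ) (x : Bool) : (Bool.not)^[2 * m] x = x := by
  induction m with
  | zero => rfl
  | succ m ih =>
    rw [Nat.mul_succ, Function.iterate_add_apply]
    simp [ih]

lemma boolNotLe {x y : Bool} : (!x) ≤ (!y) ↔ y ≤ x := by
  cases x <;> cases y <;> simp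

lemma orMono {a b c d : Bool} (h1 : a ≤ c) (h2 : b ≤ d) : (a || b) ≤ (c || d) := by
  cases a <;> cases b <;> cases c <;> cases d <;> simp_all

lemma andMono {a b c d : Bool} (h1 : a ≤ c) (h2 : b ≤ d) : (a && b) ≤ (c && d) := by
  cases a <;> cases b <;> cases c <;> cases d <;> simp_all

lemma part1 (r : Set (OckM × OckM))
    (hneg : ∀ p, p ∈ r → (ockNeg p.1, ockNeg p.2) ∈ r)
    (hsub : r ⊆ {p : OckM × OckM | p.1 0 ≤ p.2 0}) :
    r ⊆ {p : OckM × OckM | altLe p.1 p.2} := by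
  intro p hp n
  have key : (ockNeg^[n] p.1, ockNeg^[n] p.2) ∈ r := by
    induction n with
    | zero => simpa using hp
    | succ n ih => simpa [Function.iterate_succ_apply'] using hneg _ ih
  have h0 := hsub key
  simp only [Set.mem_setOf_eq, iterNeg, Nat.zero_add] at h0
  constructor
  · rintro ⟨m, rfl⟩
    rw [← two_mul] at h0 ⊢
    rwa [notIterTwo, notIterTwo] at h0
  · rintro ⟨m, rfl⟩
    rw [Function.iterate_add_apply, Function.iterate_add_apply, notIterTwo, notIterTwo] at h0
    exact boolNotLe.mp h0

lemma part2a : IsOckSubalgebra {p : OckM × OckM | altLe p.1 p.2} := by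
  refine ⟨?_, ?_, ?_⟩
  · intro p q hp hq n
    exact ⟨fun h => orMono ((hp n).1 h) ((hq n).1 h),
           fun h => orMono ((hp n).2 h) ((hq n).2 h)⟩
  · intro p q hp hq n
    exact ⟨fun h => andMono ((hp n).1 h) ((hq n).1 h),
           fun h => andMono ((hp n).2 h) ((hq n).2 h)⟩
  · intro p hp n
    refine ⟨fun h => ?_, fun h => ?_⟩
    · exact boolNotLe.mpr ((hp (n+1)).2 (Even.add_one h))
    · exact boolNotLe.mpr ((hp (n+1)).1 (Odd.add_one h))

/-- Verification of Condition (3) in the proof of Theorem 4.7: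
(1) any relation closed under coordinatewise negation and contained in
`(π₀, π₀)⁻¹(≤)` is contained in the alternating order `≼`;
(2) `≼` is itself a subalgebra of `M₁²` contained in `(π₀, π₀)⁻¹(≤)`;
(3) consequently `≼` is the unique subalgebra of `M₁²` maximal among
subalgebras contained in `(π₀, π₀)⁻¹(≤)`. -/
theorem altLe_unique_maximal :
    (∀ r : Set (OckM × OckM),
      (∀ p, p ∈ r → (ockNeg p.1, ockNeg p.2) ∈ r) →
      r ⊆ {p : OckM × OckM | p.1 0 ≤ p.2 0} →
      r ⊆ {p : OckM × OckM | altLe p.1 p.2}) ∧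
    (IsOckSubalgebra {p : OckM × OckM | altLe p.1 p.2} ∧
      {p : OckM × OckM | altLe p.1 p.2} ⊆ {p : OckM × OckM | p.1 0 ≤ p.2 0}) ∧
    (∀ s : Set (OckM × OckM), IsOckSubalgebra s →
      s ⊆ {p : OckM × OckM | p.1 0 ≤ p.2 0} →
      (∀ s' : Set (OckM × OckM), IsOckSubalgebra s' → s ⊆ s' →
        s' ⊆ {p : OckM × OckM | p.1 0 ≤ p.2 0} → s' = s) →
      s = {p : OckM × OckM | altLe p.1 p.2}) := by
  have h2b : {p : OckM × OckM | altLe p.1 p.2} ⊆ {p : OckM × OckM | p.1 0 ≤ p.2 0} :=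
    fun p hp => (hp 0).1 Even.zero
  refine ⟨part1, ⟨part2a, h2b⟩, ?_⟩
  intro s hs hsub hmax
  exact (hmax _ part2a (part1 s hs.2.2 hsub) h2b).symm
end
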